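/- Let T ∈ B(X) and S ∈ B(Y) be nonzero compact operators on Banach spaces that are equivalent after extension. Then the operator ideals generated by T and S coincide: I_T = I_S. -/

import Mathlib

open ContinuousLinearMap

/-- Membership in the operator ideal generated by an operator `T ∈ B(X, Y)`:
`W ∈ I_T(Z₁, Z₂)` iff `W` is a finite sum `Σⱼ Rⱼ ∘ T ∘ Rⱼ'`. -/
def InOperatorIdeal
    (X Y : Type*) [NormedAddCommGroup X] [NormedSpace ℂ X] [CompleteSpace X]
    [NormedAddCommGroup Y] [NormedSpace ℂ Y] [CompleteSpace Y]
    (T : X →L[ℂ] Y)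
    (Z₁ Z₂ : Type*) [NormedAddCommGroup Z₁] [NormedSpace ℂ Z₁] [CompleteSpace Z₁]
    [NormedAddCommGroup Z₂] [NormedSpace ℂ Z₂] [CompleteSpace Z₂]
    (W : Z₁ →L[ℂ] Z₂) : Prop :=
  ∃ (n : ℕ) (R : Fin n → (Y →L[ℂ] Z₂)) (R' : Fin n → (Z₁ →L[ℂ] X)),
    W = ∑ j, R j ∘L T ∘L R' j

section Aux

variable {X Y Z₀ Z₁ Z₂ Z₃ : Type*}
  [NormedAddCommGroup X] [NormedSpace ℂ X] [CompleteSpace X]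
  [NormedAddCommGroup Y] [NormedSpace ℂ Y] [CompleteSpace Y]
  [NormedAddCommGroup Z₀] [NormedSpace ℂ Z₀] [CompleteSpace Z₀]
  [NormedAddCommGroup Z₁] [NormedSpace ℂ Z₁] [CompleteSpace Z₁]
  [NormedAddCommGroup Z₂] [NormedSpace ℂ Z₂] [CompleteSpace Z₂]
  [NormedAddCommGroup Z₃] [NormedSpace ℂ Z₃] [CompleteSpace Z₃]

lemma idl_single (T : X →L[ℂ] Y) (R : Y →L[ℂ] Z₂) (R' : Z₁ →L[ℂ] X) :
    InOperatorIdeal X Y T Z₁ Z₂ (R ∘L T ∘L R') :=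
  ⟨1, fun _ => R, fun _ => R', by simp⟩

lemma idl_add {T : X →L[ℂ] Y} {W V : Z₁ →L[ℂ] Z₂}
    (hW : InOperatorIdeal X Y T Z₁ Z₂ W) (hV : InOperatorIdeal X Y T Z₁ Z₂ V) :
    InOperatorIdeal X Y T Z₁ Z₂ (W + V) := by
  obtain ⟨n, R, R', rfl⟩ := hW
  obtain ⟨m, P, P', rfl⟩ := hV
  refine ⟨n + m, Fin.addCases R P, Fin.addCases R' P', ?_⟩
  rw [Fin.sum_univ_add]
  simp

lemma idl_comp {T : X →L[ℂ] Y} {W : Z₁ →L[ℂ] Z₂}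
    (hW : InOperatorIdeal X Y T Z₁ Z₂ W) (P : Z₂ →L[ℂ] Z₃) (Q : Z₀ →L[ℂ] Z₁) :
    InOperatorIdeal X Y T Z₀ Z₃ (P ∘L W ∘L Q) := by
  obtain ⟨n, R, R', rfl⟩ := hW
  refine ⟨n, fun j => P ∘L R j, fun j => R' j ∘L Q, ?_⟩
  ext z
  simp [ContinuousLinearMap.sum_apply, map_sum]

lemma idl_sum {T : X →L[ℂ] Y} {ι : Type*} (s : Finset ι) (f : ι → (Z₁ →L[ℂ] Z₂))
    (h : ∀ i ∈ s, InOperatorIdeal X Y T Z₁ Z₂ (f i)) :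
    InOperatorIdeal X Y T Z₁ Z₂ (∑ i ∈ s, f i) :=
  Finset.sum_induction f _ (fun _ _ ha hb => idl_add ha hb) ⟨0, Fin.elim0, Fin.elim0, by simp⟩ h

lemma idl_finiteRank (T : X →L[ℂ] Y) (hT0 : T ≠ 0) (W : Z₁ →L[ℂ] Z₂)
    (h : FiniteDimensional ℂ (LinearMap.range (W : Z₁ →ₗ[ℂ] Z₂))) :
    InOperatorIdeal X Y T Z₁ Z₂ W := by
  obtain ⟨x₀, hx₀⟩ : ∃ x, T x ≠ 0 := by
    by_contra hc
    push_neg at hc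
    exact hT0 (ContinuousLinearMap.ext fun x => by simp [hc x])
  obtain ⟨g, hg1, hg2⟩ := exists_dual_vector ℂ (T x₀) (norm_ne_zero_iff.mpr hx₀)
  set φ : Y →L[ℂ] ℂ := (‖T x₀‖ : ℂ)⁻¹ • g with hφdef
  have hφ : φ (T x₀) = 1 := by
    have : (‖T x₀‖ : ℂ) ≠ 0 := by
      simpa using norm_ne_zero_iff.mpr hx₀
    simp [hφdef, hg2, inv_mul_cancel₀ this]
  haveI := h
  set V := LinearMap.range (W : Z₁ →ₗ[ℂ] Z₂)
  let b := Module.finBasis ℂ V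
  let W' : Z₁ →L[ℂ] V := W.codRestrict V (fun z => LinearMap.mem_range_self _ z)
  let f : Fin (Module.finrank ℂ V) → (Z₁ →L[ℂ] ℂ) :=
    fun i => (LinearMap.toContinuousLinearMap (b.coord i)) ∘L W'
  refine ⟨_, fun i => φ.smulRight ((b i : Z₂)), fun i => (f i).smulRight x₀, ?_⟩
  ext z
  have hsum : (W' z : Z₂) = ∑ i, b.repr (W' z) i • (b i : Z₂) := by
    conv_lhs => rw [← b.sum_repr (W' z)]
    push_cast
    rfl
  rw [ContinuousLinearMap.sum_apply]
  have hterm : ∀ i, (φ.smulRight ((b i : Z₂)) ∘L T ∘L (f i).smulRight x₀) z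
      = b.repr (W' z) i • (b i : Z₂) := by
    intro i
    have hfz : f i z = b.repr (W' z) i := by
      simp only [f, comp_apply, LinearMap.coe_toContinuousLinearMap', Module.Basis.coord_apply]
    simp only [comp_apply, smulRight_apply, map_smul, smul_eq_mul, hφ, mul_one, hfz, one_smul]
  rw [Finset.sum_congr rfl fun i _ => hterm i, ← hsum]
  rfl

end Aux

section Riesz

variable {X : Type*} [NormedAddCommGroup X] [NormedSpace ℂ X] [CompleteSpace X]

set_option maxHeartbeats 1600000 in
lemma riesz_parametrix (c : X →L[ℂ] X) (hc : IsCompactOperator c) :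
    ∃ (W k : X →L[ℂ] X), FiniteDimensional ℂ (LinearMap.range (k : X →ₗ[ℂ] X)) ∧
      (ContinuousLinearMap.id ℂ X - c) ∘L W = ContinuousLinearMap.id ℂ X - k := by
  set u : X →L[ℂ] X := ContinuousLinearMap.id ℂ X - c with hu
  set N : Submodule ℂ X := LinearMap.ker (u : X →ₗ[ℂ] X) with hN
  have humem : ∀ x, u x = x - c x := fun x => rfl
  have hNfix : ∀ x ∈ N, c x = x := by
    intro x hx
    have h0 : x - c x = 0 := hx
    have := sub_eq_zero.mp h0
    exact this.symm
  obtain ⟨K, hK, hKc⟩ := hc.image_closedBall_subset_compact (1 : ℝ)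
  have hNclosed : IsClosed (N : Set X) := ContinuousLinearMap.isClosed_ker u
  -- Step 1 : N finite dimensional
  haveI hNfin : FiniteDimensional ℂ N := by
    apply FiniteDimensional.of_isCompact_closedBall₀ ℂ (one_pos)
    have hA : IsCompact ((N : Set X) ∩ Metric.closedBall 0 1) := by
      apply IsCompact.of_isClosed_subset hK
        (hNclosed.inter Metric.isClosed_closedBall)
      rintro x ⟨hxN, hxB⟩
      exact hKc ⟨x, hxB, hNfix x hxN⟩
    have himg : Subtype.val '' (Metric.closedBall (0 : N) 1)
        = (N : Set X) ∩ Metric.closedBall 0 1 := by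
      ext x
      constructor
      · rintro ⟨⟨y, hyN⟩, hy, rfl⟩
        refine ⟨hyN, ?_⟩
        simpa [Metric.mem_closedBall, dist_eq_norm] using hy
      · rintro ⟨hxN, hxB⟩
        exact ⟨⟨x, hxN⟩, by simpa [Metric.mem_closedBall, dist_eq_norm] using hxB, rfl⟩
    exact (Topology.IsEmbedding.subtypeVal.isCompact_iff).mpr (himg ▸ hA)
  -- Step 2 : complement of N
  obtain ⟨p, hp⟩ := Submodule.ClosedComplemented.of_finiteDimensional N
  set M : Submodule ℂ X := LinearMap.ker (p : X →ₗ[ℂ] N) with hM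
  have hMclosed : IsClosed (M : Set X) := ContinuousLinearMap.isClosed_ker p
  have hprojmem : ∀ x : X, x - (p x : X) ∈ M := by
    intro x
    have : p (x - (p x : X)) = p x - p ((p x : X)) := map_sub p x _
    have h2 : p ((p x : X)) = p x := hp (p x)
    simp only [LinearMap.mem_ker, hM]
    exact (show p (x - (p x : X)) = 0 by rw [map_sub, h2, sub_self])
  -- Step 3 : u bounded below on M
  obtain ⟨δ, hδpos, hδ⟩ : ∃ δ : ℝ, 0 < δ ∧ ∀ m ∈ M, δ * ‖m‖ ≤ ‖u m‖ := by
    by_contra hcon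
    push_neg at hcon
    have hseq : ∀ n : ℕ, ∃ y : X, y ∈ M ∧ ‖y‖ = 1 ∧ ‖u y‖ < 1 / (n + 1) := by
      intro n
      obtain ⟨m, hmM, hm⟩ := hcon (1 / (n + 1)) (by positivity)
      have hm0 : m ≠ 0 := by
        rintro rfl
        simp at hm
      refine ⟨(‖m‖ : ℂ)⁻¹ • m, M.smul_mem _ hmM, ?_, ?_⟩
      · rw [norm_smul]
        have hnm : ‖m‖ ≠ 0 := norm_ne_zero_iff.mpr hm0
        simp [hnm]
      · rw [map_smul, norm_smul]
        have hnm : 0 < ‖m‖ := norm_pos_iff.mpr hm0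
        calc ‖((‖m‖ : ℂ))⁻¹‖ * ‖u m‖ = ‖m‖⁻¹ * ‖u m‖ := by
              rw [norm_inv, Complex.norm_real, norm_norm]
          _ < ‖m‖⁻¹ * (1 / (n + 1) * ‖m‖) := by
              apply mul_lt_mul_of_pos_left hm (by positivity)
          _ = 1 / (n + 1) := by field_simp
    choose y hyM hy1 hyu using hseq
    have hyK : ∀ n, c (y n) ∈ K := fun n =>
      hKc ⟨y n, by simp [Metric.mem_closedBall, dist_eq_norm, (hy1 n).le], rfl⟩
    obtain ⟨a, _, φ, hφmono, hφtend⟩ := hK.tendsto_subseq hyK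
    have huy : Filter.Tendsto (fun n => u (y (φ n))) Filter.atTop (nhds 0) := by
      rw [tendsto_iff_norm_sub_tendsto_zero]
      apply squeeze_zero (fun n => norm_nonneg _) (fun n => ?_) tendsto_one_div_add_atTop_nhds_zero_nat
      have := hyu (φ n)
      have hφn : (n : ℝ) + 1 ≤ (φ n : ℝ) + 1 := by
        have h := hφmono.id_le n
        have h2 : (n : ℝ) ≤ (φ n : ℝ) := by exact_mod_cast h
        linarith
      calc ‖u (y (φ n)) - 0‖ = ‖u (y (φ n))‖ := by simp
        _ ≤ 1 / ((φ n : ℝ) + 1) := (hyu (φ n)).le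
        _ ≤ 1 / ((n : ℝ) + 1) := by
            apply one_div_le_one_div_of_le (by positivity) hφn
    have hytend : Filter.Tendsto (fun n => y (φ n)) Filter.atTop (nhds a) := by
      have : ∀ n, y (φ n) = u (y (φ n)) + c (y (φ n)) := by
        intro n; rw [humem]; abel
      rw [funext this]
      simpa using huy.add hφtend
    have haM : a ∈ M := hMclosed.mem_of_tendsto hytend (Filter.Eventually.of_forall fun n => hyM _)
    have haN : a ∈ N := by
      have : Filter.Tendsto (fun n => u (y (φ n))) Filter.atTop (nhds (u a)) :=
        (u.continuous.tendsto a).comp hytend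
      have h0 : u a = 0 := tendsto_nhds_unique this huy
      exact h0
    have ha1 : ‖a‖ = 1 := by
      have : Filter.Tendsto (fun n => ‖y (φ n)‖) Filter.atTop (nhds ‖a‖) :=
        (continuous_norm.tendsto a).comp hytend
      have h1 : Filter.Tendsto (fun _ : ℕ => (1 : ℝ)) Filter.atTop (nhds ‖a‖) := by
        simpa [hy1] using this
      exact (tendsto_nhds_unique tendsto_const_nhds h1).symm
    have : p a = 0 := haM
    have h2 : p a = ⟨a, haN⟩ := hp ⟨a, haN⟩
    have : a = 0 := by
      have := h2.symm.trans this
      simpa using congrArg (Subtype.val) this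
    rw [this] at ha1
    simp at ha1
  -- Step 4 : range u is closed
  set u' : M →L[ℂ] X := u ∘L M.subtypeL with hu'
  set R : Submodule ℂ X := LinearMap.range (u : X →ₗ[ℂ] X) with hR
  have hrange_eq : ∀ x : X, u x = u' ⟨x - (p x : X), hprojmem x⟩ := by
    intro x
    have hx : u ((p x : X)) = 0 := by
      have : (p x : X) ∈ N := (p x).2
      exact this
    simp only [hu', comp_apply, Submodule.coe_subtypeL', Submodule.coe_subtype]
    rw [map_sub, hx, sub_zero]
  have hRu' : (R : Set X) = Set.range u' := by
    apply Set.Subset.antisymm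
    · rintro x ⟨y, rfl⟩
      exact ⟨⟨y - (p y : X), hprojmem y⟩, (hrange_eq y).symm⟩
    · rintro x ⟨⟨m, hmM⟩, rfl⟩
      exact ⟨m, rfl⟩
  have hanti : AntilipschitzWith (⟨δ⁻¹, by positivity⟩ : NNReal) u' := by
    apply AntilipschitzWith.of_le_mul_dist
    intro m₁ m₂
    have h1 : δ * ‖(m₁ : X) - (m₂ : X)‖ ≤ ‖u ((m₁ : X) - (m₂ : X))‖ :=
      hδ _ (M.sub_mem m₁.2 m₂.2)
    have h2 : u' m₁ - u' m₂ = u ((m₁ : X) - (m₂ : X)) := by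
      simp [hu', map_sub]
    rw [Subtype.dist_eq, dist_eq_norm, dist_eq_norm, h2]
    change ‖(m₁ : X) - (m₂ : X)‖ ≤ δ⁻¹ * ‖u ((m₁ : X) - (m₂ : X))‖
    calc ‖(m₁ : X) - (m₂ : X)‖ ≤ δ⁻¹ * (δ * ‖(m₁ : X) - (m₂ : X)‖) := by
          rw [← mul_assoc, inv_mul_cancel₀ hδpos.ne', one_mul]
      _ ≤ δ⁻¹ * ‖u ((m₁ : X) - (m₂ : X))‖ := by
          apply mul_le_mul_of_nonneg_left h1 (by positivity)
  haveI : CompleteSpace M := hMclosed.completeSpace_coe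
  have hRclosed : IsClosed (R : Set X) := by
    rw [hRu']
    exact hanti.isClosed_range u'.uniformContinuous
  -- Step 5 : the range has finite codimension
  haveI hRinst : IsClosed (R : Set X) := hRclosed
  haveI hQfin : FiniteDimensional ℂ (X ⧸ R) := by
    by_contra hInf
    let πL : X →L[ℂ] X ⧸ R := LinearMap.mkContinuous R.mkQ 1
      (fun x => by simpa using Submodule.Quotient.norm_mk_le R x)
    have hπL : ∀ x, πL x = R.mkQ x := fun x => rfl
    have hsup : ∀ L : List X, R ⊔ Submodule.span ℂ {x | x ∈ L} =
        Submodule.comap R.mkQ (Submodule.span ℂ (R.mkQ '' {x | x ∈ L})) := by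
      intro L
      rw [← Submodule.map_span, Submodule.comap_map_eq, Submodule.ker_mkQ, sup_comm]
    have hclosed : ∀ L : List X,
        IsClosed (((R ⊔ Submodule.span ℂ {x | x ∈ L} : Submodule ℂ X)) : Set X) := by
      intro L
      rw [hsup]
      haveI : FiniteDimensional ℂ (Submodule.span ℂ (R.mkQ '' {x | x ∈ L})) :=
        Module.Finite.span_of_finite ℂ (L.finite_toSet.image _)
      have hcl : IsClosed ((Submodule.span ℂ (R.mkQ '' {x | x ∈ L})) : Set (X ⧸ R)) :=
        Submodule.closed_of_finiteDimensional _
      exact hcl.preimage πL.continuous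
    have hne : ∀ L : List X, R ⊔ Submodule.span ℂ {x | x ∈ L} ≠ ⊤ := by
      intro L htop
      apply hInf
      have hmap := congrArg (Submodule.map R.mkQ) htop
      rw [Submodule.map_sup, Submodule.map_top, Submodule.range_mkQ, Submodule.map_span] at hmap
      have hmapR : Submodule.map R.mkQ R = ⊥ := by
        rw [eq_bot_iff]
        rintro z ⟨x, hxR, rfl⟩
        simpa using (Submodule.Quotient.mk_eq_zero R).mpr hxR
      rw [hmapR, bot_sup_eq] at hmap
      exact ⟨hmap ▸ Submodule.fg_span (L.finite_toSet.image _)⟩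
    have hpick : ∀ L : List X, ∃ z : X, ‖z‖ = 1 ∧
        ∀ v ∈ R ⊔ Submodule.span ℂ {x | x ∈ L}, (1/2 : ℝ) ≤ ‖z - v‖ := by
      intro L
      set G := R ⊔ Submodule.span ℂ {x | x ∈ L} with hG
      have hex : ∃ x : X, x ∉ G := by
        by_contra hall
        push_neg at hall
        exact hne L (Submodule.eq_top_iff'.mpr hall)
      obtain ⟨x₀, hx₀G, hx₀d⟩ := riesz_lemma (hclosed L) hex (by norm_num : (1/2 : ℝ) < 1)
      have hx₀0 : x₀ ≠ 0 := fun h => hx₀G (h ▸ G.zero_mem)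
      have hn0 : ‖x₀‖ ≠ 0 := norm_ne_zero_iff.mpr hx₀0
      refine ⟨(‖x₀‖ : ℂ)⁻¹ • x₀, ?_, ?_⟩
      · rw [norm_smul, norm_inv, Complex.norm_real, norm_norm]
        field_simp
      · intro v hv
        have hveq : (‖x₀‖ : ℂ)⁻¹ • x₀ - v = (‖x₀‖ : ℂ)⁻¹ • (x₀ - (‖x₀‖ : ℂ) • v) := by
          rw [smul_sub, smul_smul, inv_mul_cancel₀ (by exact_mod_cast hn0), one_smul]
        rw [hveq, norm_smul, norm_inv, Complex.norm_real, norm_norm]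
        have hd := hx₀d ((‖x₀‖ : ℂ) • v) (G.smul_mem _ hv)
        have hpos : 0 < ‖x₀‖ := norm_pos_iff.mpr hx₀0
        calc (1/2 : ℝ) = ‖x₀‖⁻¹ * (1/2 * ‖x₀‖) := by field_simp
          _ ≤ ‖x₀‖⁻¹ * ‖x₀ - (‖x₀‖ : ℂ) • v‖ := by
              apply mul_le_mul_of_nonneg_left hd (by positivity)
    let g : ℕ → List X := fun n => Nat.rec [] (fun _ l => (hpick l).choose :: l) n
    let y : ℕ → X := fun n => (hpick (g n)).choose
    have hg_succ : ∀ n, g (n+1) = y n :: g n := fun n => rfl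
    have hy1 : ∀ n, ‖y n‖ = 1 := fun n => (hpick (g n)).choose_spec.1
    have hyfar : ∀ n, ∀ v ∈ R ⊔ Submodule.span ℂ {x | x ∈ g n}, (1/2 : ℝ) ≤ ‖y n - v‖ :=
      fun n => (hpick (g n)).choose_spec.2
    have hmemg : ∀ m n, m < n → y m ∈ g n := by
      intro m n h
      induction n with
      | zero => omega
      | succ kk ih =>
        rw [hg_succ]
        rcases Nat.lt_succ_iff_lt_or_eq.mp h with h' | h'
        · exact List.mem_cons_of_mem _ (ih h')
        · subst h'; exact List.mem_cons_self
    have hsep : ∀ m n, m < n → (1/2 : ℝ) ≤ ‖c (y n) - c (y m)‖ := by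
      intro m n hmn
      have hveq : c (y n) - c (y m) = y n - (u (y n) + y m - u (y m)) := by
        have h1 : u (y n) = y n - c (y n) := humem _
        have h2 : u (y m) = y m - c (y m) := humem _
        rw [h1, h2]; abel
      rw [hveq]
      apply hyfar n
      have hu1 : u (y n) ∈ R ⊔ Submodule.span ℂ {x | x ∈ g n} :=
        Submodule.mem_sup_left ⟨y n, rfl⟩
      have hu2 : u (y m) ∈ R ⊔ Submodule.span ℂ {x | x ∈ g n} :=
        Submodule.mem_sup_left ⟨y m, rfl⟩
      have hy2 : y m ∈ R ⊔ Submodule.span ℂ {x | x ∈ g n} :=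
        Submodule.mem_sup_right (Submodule.subset_span (hmemg m n hmn))
      exact Submodule.sub_mem _ (Submodule.add_mem _ hu1 hy2) hu2
    have hyK : ∀ n, c (y n) ∈ K := fun n =>
      hKc ⟨y n, by simp [Metric.mem_closedBall, dist_eq_norm, (hy1 n).le], rfl⟩
    obtain ⟨a, _, φ, hφmono, hφtend⟩ := hK.tendsto_subseq hyK
    have hcauchy := hφtend.cauchySeq
    rw [Metric.cauchySeq_iff] at hcauchy
    obtain ⟨Nn, hNn⟩ := hcauchy (1/4) (by norm_num)
    have h1 := hNn (Nn + 1) (by omega) Nn (le_refl _)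
    have hlt : φ Nn < φ (Nn + 1) := hφmono (by omega)
    have h2 := hsep (φ Nn) (φ (Nn + 1)) hlt
    rw [dist_eq_norm] at h1
    simp only [Function.comp] at h1
    linarith
  -- Step 6 : construct the parametrix
  haveI : CompleteSpace R := hRclosed.completeSpace_coe
  let d' : M →L[ℂ] R := u'.codRestrict R (fun m => ⟨(m : X), rfl⟩)
  have hd'app : ∀ m : M, (d' m : X) = u (m : X) := fun m => rfl
  have hker : LinearMap.ker (d' : M →ₗ[ℂ] R) = ⊥ := by
    rw [LinearMap.ker_eq_bot']
    intro m hm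
    have h0 : u (m : X) = 0 := congrArg Subtype.val hm
    have hnn : δ * ‖(m : X)‖ ≤ 0 := by
      have := hδ (m : X) m.2
      rw [h0, norm_zero] at this
      exact this
    have h3 : ‖(m : X)‖ ≤ 0 := by nlinarith
    exact Subtype.ext (norm_le_zero_iff.mp h3)
  have hrangetop : LinearMap.range (d' : M →ₗ[ℂ] R) = ⊤ := by
    rw [Submodule.eq_top_iff']
    rintro ⟨r, hr⟩
    obtain ⟨x, rfl⟩ := hr
    refine ⟨⟨x - (p x : X), hprojmem x⟩, ?_⟩
    apply Subtype.ext
    change (d' ⟨x - (p x : X), hprojmem x⟩ : X) = u x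
    exact (hrange_eq x).symm
  let d : M ≃L[ℂ] R := ContinuousLinearEquiv.ofBijective d' hker hrangetop
  obtain ⟨q, hq⟩ := Submodule.ClosedComplemented.of_quotient_finiteDimensional hRclosed
  set k : X →L[ℂ] X := ContinuousLinearMap.id ℂ X - R.subtypeL ∘L q with hk
  have hkapp : ∀ x, k x = x - (q x : X) := fun x => rfl
  have hq0 : ∀ x, q (k x) = 0 := by
    intro x
    rw [hkapp, map_sub]
    have : q ((q x : X)) = q x := hq (q x)
    rw [this, sub_self]
  have hkfin : FiniteDimensional ℂ (LinearMap.range (k : X →ₗ[ℂ] X)) := by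
    let j : (LinearMap.range (k : X →ₗ[ℂ] X)) →ₗ[ℂ] X ⧸ R := R.mkQ.comp (LinearMap.range (k : X →ₗ[ℂ] X)).subtype
    apply FiniteDimensional.of_injective j
    rw [← LinearMap.ker_eq_bot, LinearMap.ker_eq_bot']
    rintro ⟨v, hv⟩ hjv
    have hvR : v ∈ R := by
      have : R.mkQ v = 0 := hjv
      rwa [← Submodule.ker_mkQ R]
    have hqv0 : q v = 0 := by
      obtain ⟨x, rfl⟩ := hv
      exact hq0 x
    have hqv : q v = ⟨v, hvR⟩ := hq ⟨v, hvR⟩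
    have h5 : (⟨v, hvR⟩ : R) = 0 := by rw [← hqv, hqv0]
    apply Subtype.ext
    simpa using congrArg Subtype.val h5
  have hmemρ : ∀ x, (ContinuousLinearMap.id ℂ X - k) x ∈ R := by
    intro x
    have : (ContinuousLinearMap.id ℂ X - k) x = (q x : X) := by
      simp [hkapp]
    rw [this]
    exact (q x).2
  let ρ : X →L[ℂ] R := (ContinuousLinearMap.id ℂ X - k).codRestrict R hmemρ
  refine ⟨M.subtypeL ∘L (d.symm : R →L[ℂ] M) ∘L ρ, k, hkfin, ?_⟩
  ext x
  have hstep : u ((d.symm (ρ x) : M) : X) = ((d (d.symm (ρ x))) : X) := rfl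
  have : ((ContinuousLinearMap.id ℂ X - c) ∘L (M.subtypeL ∘L (d.symm : R →L[ℂ] M) ∘L ρ)) x
      = u ((d.symm (ρ x) : M) : X) := rfl
  rw [this, hstep, d.apply_symm_apply]
  have : ((ρ x : R) : X) = x - k x := rfl
  rw [this]
  simp

end Riesz

section Key

variable {X Y : Type*}
  [NormedAddCommGroup X] [NormedSpace ℂ X] [CompleteSpace X]
  [NormedAddCommGroup Y] [NormedSpace ℂ Y] [CompleteSpace Y]

lemma eae_mem_ideal (T : X →L[ℂ] X) (S : Y →L[ℂ] Y) (hS0 : S ≠ 0)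
    (hT : IsCompactOperator T)
    (E : (Y × X) ≃L[ℂ] (X × Y)) (F : (X × Y) ≃L[ℂ] (Y × X))
    (hEF : T.prodMap (ContinuousLinearMap.id ℂ Y) =
      (E : (Y × X) →L[ℂ] (X × Y)) ∘L (S.prodMap (ContinuousLinearMap.id ℂ X)) ∘L
        (F : (X × Y) →L[ℂ] (Y × X))) :
    InOperatorIdeal Y Y S X X T := by
  have hpt : ∀ z : X × Y, (T (z.1), z.2) = E ((S ((F z).1), (F z).2)) := by
    intro z
    have h := ContinuousLinearMap.ext_iff.mp hEF z
    simpa [coe_prodMap', Prod.map] using h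
  set R₁ : Y →L[ℂ] X := (fst ℂ X Y) ∘L (E : (Y × X) →L[ℂ] (X × Y)) ∘L (inl ℂ Y X) with hR₁
  set R₁' : X →L[ℂ] Y := (fst ℂ Y X) ∘L (F : (X × Y) →L[ℂ] (Y × X)) ∘L (inl ℂ X Y) with hR₁'
  set A12 : X →L[ℂ] X := (fst ℂ X Y) ∘L (F.symm : (Y × X) →L[ℂ] (X × Y)) ∘L (inr ℂ Y X) with hA12
  set G21 : X →L[ℂ] X := (snd ℂ Y X) ∘L (E.symm : (X × Y) →L[ℂ] (Y × X)) ∘L (inl ℂ X Y) with hG21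
  set c : X →L[ℂ] X := (A12 ∘L G21) ∘L T with hcdef
  -- auxiliary pointwise identities
  have hE2 : ∀ v : X, (E ((0 : Y), v)).1 = T (A12 v) := by
    intro v
    have h := hpt (F.symm ((0 : Y), v))
    have hFz : F (F.symm ((0 : Y), v)) = ((0 : Y), v) := F.apply_symm_apply _
    rw [hFz] at h
    simp only [map_zero] at h
    have := congrArg Prod.fst h
    simpa [hA12] using this.symm
  have hG : ∀ x : X, (F (x, (0 : Y))).2 = G21 (T x) := by
    intro x
    have h := hpt (x, (0 : Y))
    have h2 := congrArg (fun w => (E.symm w).2) h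
    simp only [ContinuousLinearEquiv.symm_apply_apply] at h2
    simpa [hG21] using h2.symm
  have hmain : T = R₁ ∘L S ∘L R₁' + T ∘L c := by
    ext x
    simp only [ContinuousLinearMap.add_apply, comp_apply]
    have h := hpt (x, (0 : Y))
    have h1 := congrArg Prod.fst h
    simp only at h1
    have hsplit : (S ((F (x, (0:Y))).1), (F (x, (0:Y))).2)
        = ((S ((F (x, (0:Y))).1), (0 : X)) + ((0 : Y), (F (x, (0:Y))).2)) := by
      simp [Prod.ext_iff]
    rw [hsplit, map_add] at h1
    simp only [Prod.fst_add] at h1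
    have hterm2 : (E ((0 : Y), (F (x, (0:Y))).2)).1 = T (A12 (G21 (T x))) := by
      rw [hE2, hG]
    rw [hterm2] at h1
    have hRR : R₁ (S (R₁' x)) = (E ((S ((F (x, (0:Y))).1)), (0 : X))).1 := by
      simp [hR₁, hR₁']
    rw [hRR]
    have hcx : c x = A12 (G21 (T x)) := rfl
    rw [hcx]
    exact h1
  have hccompact : IsCompactOperator (c : X →L[ℂ] X) := by
    have h := hT.clm_comp (A12 ∘L G21)
    rwa [hcdef, coe_comp']
  obtain ⟨W, k, hkfin, hWk⟩ := riesz_parametrix c hccompact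
  have hfactor : T = R₁ ∘L S ∘L (R₁' ∘L W) + T ∘L k := by
    ext x
    simp only [ContinuousLinearMap.add_apply, comp_apply]
    have hwx := ContinuousLinearMap.ext_iff.mp hWk x
    simp only [comp_apply, ContinuousLinearMap.sub_apply,
      ContinuousLinearMap.id_apply] at hwx
    have hmx := ContinuousLinearMap.ext_iff.mp hmain (W x)
    simp only [ContinuousLinearMap.add_apply, comp_apply] at hmx
    have hx : x = W x - c (W x) + k x := by rw [hwx]; abel
    calc T x = T (W x - c (W x) + k x) := by rw [← hx]
      _ = T (W x) - T (c (W x)) + T (k x) := by rw [map_add, map_sub]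
      _ = R₁ (S (R₁' (W x))) + T (k x) := by rw [hmx]; abel
  rw [hfactor]
  apply idl_add
  · exact idl_single S R₁ (R₁' ∘L W)
  · apply idl_finiteRank S hS0
    haveI : FiniteDimensional ℂ (Submodule.map (T : X →ₗ[ℂ] X) (LinearMap.range (k : X →ₗ[ℂ] X))) :=
      Module.Finite.map _ _
    have hle : LinearMap.range ((T ∘L k : X →L[ℂ] X) : X →ₗ[ℂ] X) ≤ Submodule.map (T : X →ₗ[ℂ] X) (LinearMap.range (k : X →ₗ[ℂ] X)) := by
      rintro z ⟨x, rfl⟩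
      exact ⟨k x, ⟨x, rfl⟩, rfl⟩
    exact Submodule.finiteDimensional_of_le hle

end Key

/-- Nonzero compact operators that are equivalent after extension
generate the same operator ideal. -/
theorem operator_ideal_eq_of_equivalent_after_extension
    (X Y : Type*) [NormedAddCommGroup X] [NormedSpace ℂ X] [CompleteSpace X]
    [NormedAddCommGroup Y] [NormedSpace ℂ Y] [CompleteSpace Y]
    (T : X →L[ℂ] X) (S : Y →L[ℂ] Y) (hT0 : T ≠ 0) (hS0 : S ≠ 0)
    (hT : IsCompactOperator T) (hS : IsCompactOperator S)
    (hEAE : ∃ (E : (Y × X) ≃L[ℂ] (X × Y)) (F : (X × Y) ≃L[ℂ] (Y × X)),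
      T.prodMap (ContinuousLinearMap.id ℂ Y) =
        (E : (Y × X) →L[ℂ] (X × Y)) ∘L
          (S.prodMap (ContinuousLinearMap.id ℂ X)) ∘L
            (F : (X × Y) →L[ℂ] (Y × X))) :
    ∀ (Z₁ Z₂ : Type*) [NormedAddCommGroup Z₁] [NormedSpace ℂ Z₁] [CompleteSpace Z₁]
      [NormedAddCommGroup Z₂] [NormedSpace ℂ Z₂] [CompleteSpace Z₂]
      (W : Z₁ →L[ℂ] Z₂),
      InOperatorIdeal X X T Z₁ Z₂ W ↔ InOperatorIdeal Y Y S Z₁ Z₂ W := by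
  obtain ⟨E, F, hEF⟩ := hEAE
  have hTS : InOperatorIdeal Y Y S X X T := eae_mem_ideal T S hS0 hT E F hEF
  have hEF' : S.prodMap (ContinuousLinearMap.id ℂ X) =
      (E.symm : (X × Y) →L[ℂ] (Y × X)) ∘L (T.prodMap (ContinuousLinearMap.id ℂ Y)) ∘L
        (F.symm : (Y × X) →L[ℂ] (X × Y)) := by
    apply ContinuousLinearMap.ext
    intro z
    rw [hEF]
    simp [coe_comp']
  have hST : InOperatorIdeal X X T Y Y S := eae_mem_ideal S T hT0 hS E.symm F.symm hEF'
  intro Z₁ Z₂ _ _ _ _ _ _ W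
  constructor
  · rintro ⟨n, R, R', rfl⟩
    exact idl_sum _ _ (fun j _ => idl_comp hTS (R j) (R' j))
  · rintro ⟨n, R, R', rfl⟩
    exact idl_sum _ _ (fun j _ => idl_comp hST (R j) (R' j))
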